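/- Let t ≥ 1, let R be a d×t random matrix whose entries are i.i.d., each equal to +1/√t or −1/√t with probability 1/2, let S ∈ ℝ^{n×d} and T ∈ ℝ^{d×k} be real matrices, and let a > 0. Then Prob[ ‖ST − SRRᵀT‖_F ≥ a ] ≤ 2‖S‖_F²‖T‖_F² / (t·a²). -/

import Mathlib

open MeasureTheory
open scoped Matrix

/-- Frobenius norm of a real matrix. -/
noncomputable def frobNorm {m n : ℕ} (M : Matrix (Fin m) (Fin n) ℝ) : ℝ :=
  Real.sqrt (∑ i, ∑ j, (M i j) ^ 2)

/-- Spectral (operator) norm of a real matrix, viewed as a linear map between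
Euclidean spaces. -/
noncomputable def specNorm {m n : ℕ} (M : Matrix (Fin m) (Fin n) ℝ) : ℝ :=
  ‖LinearMap.toContinuousLinearMap (Matrix.toEuclideanLin M)‖

/-- `P` is the Moore–Penrose pseudoinverse of `M` (the four Penrose conditions;
such a `P` is unique). -/
def IsMoorePenrose {m n : ℕ} (M : Matrix (Fin m) (Fin n) ℝ)
    (P : Matrix (Fin n) (Fin m) ℝ) : Prop :=
  M * P * M = M ∧ P * M * P = P ∧ (M * P)ᵀ = M * P ∧ (P * M)ᵀ = P * M

/-- `X` is an `n × k` cluster indicator matrix: each row `i` has a single nonzero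
entry, in column `f i`, equal to `1/√(z_{f i})` where `z_j` is the number of rows
assigned to column `j`. -/
def IsIndicator {n k : ℕ} (X : Matrix (Fin n) (Fin k) ℝ) : Prop :=
  ∃ f : Fin n → Fin k, ∀ i j, X i j =
    if f i = j then 1 / Real.sqrt ((Finset.univ.filter fun i' => f i' = j).card) else 0

/-- The singular values of a `k × t` real matrix `M` (in some order): the square
roots of the eigenvalues of `M * Mᵀ`. -/
noncomputable def singVals {k t : ℕ} (M : Matrix (Fin k) (Fin t) ℝ) (i : Fin k) : ℝ :=
  Real.sqrt ((Matrix.isHermitian_mul_conjTranspose_self M).eigenvalues i)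

/-- The `d × t` random sign matrix with entries `±1/√t`, as a function of the
sample point `ω` (a `d × t` array of fair coins). -/
noncomputable def signMatrix (d t : ℕ) (ω : Fin d → Fin t → Bool) :
    Matrix (Fin d) (Fin t) ℝ :=
  Matrix.of fun i j => (if ω i j then (1 : ℝ) else -1) / Real.sqrt t

/-- The law of a `d × t` matrix of i.i.d. fair signs: the uniform probability
measure on all `d × t` sign patterns. -/
noncomputable def signMeasure (d t : ℕ) : Measure (Fin d → Fin t → Bool) :=
  (PMF.uniformOfFintype (Fin d → Fin t → Bool)).toMeasure

namespace St11
variable {d t : ℕ}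
abbrev Om (d t : ℕ) := Fin d → Fin t → Bool
noncomputable def e (ω : Om d t) (p : Fin d) (l : Fin t) : ℝ := if ω p l then 1 else -1
lemma e_mul_self (ω : Om d t) (p : Fin d) (l : Fin t) : e ω p l * e ω p l = 1 := by
  unfold e; split <;> norm_num
def flip (z : Fin d × Fin t) (ω : Om d t) : Om d t :=
  fun i j => if (i, j) = z then !(ω i j) else ω i j
lemma flip_invol (z : Fin d × Fin t) : Function.Involutive (flip (d := d) (t := t) z) := by
  intro ω; funext i j; simp only [flip]; split <;> simp
lemma sum_flip (z : Fin d × Fin t) (f : Om d t → ℝ) :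
    ∑ ω : Om d t, f (flip z ω) = ∑ ω : Om d t, f ω :=
  Equiv.sum_comp ((flip_invol z).toPerm _) f
lemma sum_eq_zero_of_flip (z : Fin d × Fin t) (f : Om d t → ℝ)
    (h : ∀ ω, f (flip z ω) = - f ω) : ∑ ω : Om d t, f ω = 0 := by
  have h2 := sum_flip z f
  simp only [h, Finset.sum_neg_distrib] at h2
  linarith
lemma e_flip (ω : Om d t) (z : Fin d × Fin t) (i : Fin d) (j : Fin t) :
    e (flip z ω) i j = (if (i, j) = z then -1 else 1) * e ω i j := by
  by_cases h : (i, j) = z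
  · rw [if_pos h]
    simp only [e, flip, if_pos h]
    cases hb : ω i j <;> simp [hb]
  · rw [if_neg h]
    simp only [e, flip, if_neg h, one_mul]

noncomputable def N (d t : ℕ) : ℝ := (Fintype.card (Om d t) : ℝ)

lemma sum_one : ∑ _ω : Om d t, (1 : ℝ) = N d t := by
  simp [N, Finset.card_univ]

lemma sum_e2 (p q : Fin d) (l : Fin t) :
    ∑ ω : Om d t, e ω p l * e ω q l = if p = q then N d t else 0 := by
  by_cases h : p = q
  · subst h
    simp only [if_pos rfl, e_mul_self]
    exact sum_one
  · rw [if_neg h]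
    apply sum_eq_zero_of_flip (p, l)
    intro ω
    simp only [e_flip, Prod.mk.injEq]
    simp [h, Ne.symm h]

/-- Inner 4-product orthogonality computation. -/
lemma sum_e4 (p q u v : Fin d) (l m : Fin t) :
    ∑ ω : Om d t, e ω p l * e ω q l * (e ω u m * e ω v m)
      = if l = m then
          N d t * ((if p = q then (1:ℝ) else 0) * (if u = v then 1 else 0)
            + (if p = u then (1:ℝ) else 0) * (if q = v then 1 else 0)
            + (if p = v then (1:ℝ) else 0) * (if q = u then 1 else 0)
            - 2 * (if p = q ∧ p = u ∧ p = v then 1 else 0))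
        else N d t * ((if p = q then (1:ℝ) else 0) * (if u = v then 1 else 0)) := by
  by_cases hlm : l = m
  · subst hlm
    rw [if_pos rfl]
    by_cases hpq : p = q
    · subst hpq
      have hrw : ∀ ω : Om d t, e ω p l * e ω p l * (e ω u l * e ω v l)
          = e ω u l * e ω v l := by
        intro ω; rw [e_mul_self, one_mul]
      simp only [hrw, sum_e2]
      by_cases huv : u = v
      · subst huv
        by_cases hpu : p = u
        · subst hpu; norm_num
        · norm_num [hpu]
      · by_cases hpu : p = u
        · have hpv : ¬p = v := fun h => huv (hpu.symm.trans h)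
          norm_num [huv, hpu, hpv]
        · norm_num [huv, hpu]
    · by_cases huv : u = v
      · subst huv
        have hrw : ∀ ω : Om d t, e ω p l * e ω q l * (e ω u l * e ω u l)
            = e ω p l * e ω q l := by
          intro ω; rw [e_mul_self, mul_one]
        simp only [hrw, sum_e2]
        by_cases hqu : q = u
        · have hpu : ¬p = u := fun h => hpq (h.trans hqu.symm)
          norm_num [hpq, hqu, hpu]
        · norm_num [hpq, hqu]
      · -- p ≠ q, u ≠ v
        by_cases hpu : p = u
        · subst hpu
          by_cases hqv : q = v
          · subst hqv
            have hc : ∀ ω : Om d t, e ω p l * e ω q l * (e ω p l * e ω q l) = 1 := by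
              intro ω
              have h1 := e_mul_self ω p l; have h2 := e_mul_self ω q l
              nlinarith [h1, h2]
            simp only [hc]
            rw [sum_one]
            norm_num [hpq, fun h : p = q ∧ _ ∧ _ => hpq h.1]
          · rw [sum_eq_zero_of_flip (q, l) _ ?_]
            · norm_num [hpq, hqv, Ne.symm hpq]
            · intro ω
              simp only [e_flip, Prod.mk.injEq]
              simp [hpq, Ne.symm hpq, hqv, Ne.symm hqv]
              try ring
        · by_cases hpv : p = v
          · subst hpv
            by_cases hqu : q = u
            · subst hqu
              have hc : ∀ ω : Om d t, e ω p l * e ω q l * (e ω q l * e ω p l) = 1 := by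
                intro ω
                have h1 := e_mul_self ω p l; have h2 := e_mul_self ω q l
                nlinarith [h1, h2]
              simp only [hc]
              rw [sum_one]
              norm_num [hpq, hpu, fun h : p = q ∧ _ ∧ _ => hpq h.1]
            · rw [sum_eq_zero_of_flip (q, l) _ ?_]
              · norm_num [hpq, hpu, hqu, Ne.symm hpu]
              · intro ω
                simp only [e_flip, Prod.mk.injEq]
                simp [hpq, Ne.symm hpq, hqu, Ne.symm hqu]
                try ring
          · -- p ∉ {q, u, v}
            rw [sum_eq_zero_of_flip (p, l) _ ?_]
            · norm_num [hpq, hpu, hpv]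
            · intro ω
              simp only [e_flip, Prod.mk.injEq]
              simp [hpq, Ne.symm hpq, hpu, Ne.symm hpu, hpv, Ne.symm hpv]
              try ring
  · rw [if_neg hlm]
    by_cases hpq : p = q
    · subst hpq
      have hrw : ∀ ω : Om d t, e ω p l * e ω p l * (e ω u m * e ω v m)
          = e ω u m * e ω v m := by
        intro ω; rw [e_mul_self, one_mul]
      simp only [hrw, sum_e2]
      by_cases huv : u = v <;> norm_num [huv]
    · rw [sum_eq_zero_of_flip (p, l) _ ?_]
      · norm_num [hpq]
      · intro ω
        simp only [e_flip, Prod.mk.injEq]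
        simp [hpq, Ne.symm hpq, hlm, Ne.symm hlm]
        try ring
noncomputable def D {d : ℕ} (p q : Fin d) : ℝ := if p = q then 1 else 0

lemma sum_e2' (p q : Fin d) (l : Fin t) :
    ∑ ω : Om d t, e ω p l * e ω q l = N d t * D p q := by
  rw [sum_e2]; unfold D; split_ifs <;> ring

lemma if_and_eq (p q u v : Fin d) :
    (if p = q ∧ p = u ∧ p = v then (1:ℝ) else 0) = D p q * (D p u * D p v) := by
  unfold D
  by_cases h1 : p = q <;> by_cases h2 : p = u <;> by_cases h3 : p = v <;>
    simp_all

lemma sum_e4' (p q u v : Fin d) (l m : Fin t) :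
    ∑ ω : Om d t, e ω p l * e ω q l * (e ω u m * e ω v m)
      = if l = m then
          N d t * (D p q * D u v + D p u * D q v + D p v * D q u
            - 2 * (D p q * (D p u * D p v)))
        else N d t * (D p q * D u v) := by
  rw [sum_e4, if_and_eq]; unfold D; rfl

lemma sum_term (p q u v : Fin d) (l m : Fin t) :
    ∑ ω : Om d t, (D p q - e ω p l * e ω q l) * (D u v - e ω u m * e ω v m)
      = if l = m then
          N d t * (D p u * D q v + D p v * D q u - 2 * (D p q * (D p u * D p v)))
        else 0 := by
  have hexp : ∀ ω : Om d t,
      (D p q - e ω p l * e ω q l) * (D u v - e ω u m * e ω v m)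
        = D p q * D u v - D p q * (e ω u m * e ω v m)
          - D u v * (e ω p l * e ω q l)
          + e ω p l * e ω q l * (e ω u m * e ω v m) := by
    intro ω; ring
  simp only [hexp]
  rw [Finset.sum_add_distrib, Finset.sum_sub_distrib, Finset.sum_sub_distrib,
    Finset.sum_const, Finset.card_univ, nsmul_eq_mul,
    ← Finset.mul_sum, ← Finset.mul_sum, sum_e2', sum_e2', sum_e4']
  have hN : (Fintype.card (Om d t) : ℝ) = N d t := rfl
  rw [hN]
  by_cases hlm : l = m
  · rw [if_pos hlm, if_pos hlm]; ring
  · rw [if_neg hlm, if_neg hlm]; ring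

lemma collapse1 (f : Fin d → ℝ) (p : Fin d) :
    ∑ u, f u * D p u = f p := by
  unfold D
  simp [mul_ite, Finset.sum_ite_eq]

lemma collapse2 (f : Fin d → Fin d → ℝ) (p q : Fin d) :
    ∑ u, ∑ v, f u v * (D p u * D q v) = f p q := by
  have h : ∀ u, ∑ v, f u v * (D p u * D q v) = (∑ v, f u v * D q v) * D p u := by
    intro u
    rw [Finset.sum_mul]
    exact Finset.sum_congr rfl fun v _ => by ring
  simp only [h]
  rw [collapse1 (fun u => ∑ v, f u v * D q v) p, collapse1 (fun v => f p v) q]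

lemma inner_collapse (c : Fin d → Fin d → ℝ) (p q : Fin d) :
    ∑ u, ∑ v, (c p q * c u v) * (N d t * (D p u * D q v + D p v * D q u
        - 2 * (D p q * (D p u * D p v))))
      = N d t * (c p q * c p q + c p q * c q p - 2 * (D p q * (c p q * c p p))) := by
  have hexp : ∀ u v, (c p q * c u v) * (N d t * (D p u * D q v + D p v * D q u
        - 2 * (D p q * (D p u * D p v))))
      = (N d t * c p q) * (c u v * (D p u * D q v))
        + (N d t * c p q) * (c u v * (D q u * D p v))
        - (2 * N d t * c p q * D p q) * (c u v * (D p u * D p v)) := by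
    intro u v; ring
  simp only [hexp, Finset.sum_add_distrib, Finset.sum_sub_distrib,
    ← Finset.mul_sum]
  rw [collapse2 c p q]
  
  have h2 : ∑ u, ∑ v, c u v * (D q u * D p v) = c q p := collapse2 c q p
  have h3 : ∑ u, ∑ v, c u v * (D p u * D p v) = c p p := collapse2 c p p
  rw [h2, h3]
  try ring

lemma sum_sq (c : Fin d → Fin d → ℝ) :
    ∑ ω : Om d t,
        (∑ l : Fin t, ∑ p : Fin d, ∑ q : Fin d,
          c p q * (D p q - e ω p l * e ω q l)) ^ 2
      = N d t * t *
          (∑ p : Fin d, ∑ q : Fin d,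
            (c p q * c p q + c p q * c q p - 2 * (D p q * (c p q * c p p)))) := by
  have hF : ∀ ω : Om d t,
      (∑ l : Fin t, ∑ p : Fin d, ∑ q : Fin d, c p q * (D p q - e ω p l * e ω q l))
        = ∑ α : Fin t × Fin d × Fin d,
            c α.2.1 α.2.2 * (D α.2.1 α.2.2 - e ω α.2.1 α.1 * e ω α.2.2 α.1) := by
    intro ω
    simp only [Fintype.sum_prod_type]
  simp only [hF, pow_two, Finset.sum_mul_sum]
  rw [Finset.sum_comm]
  have hswap : ∀ α : Fin t × Fin d × Fin d,
      (∑ ω : Om d t, ∑ β : Fin t × Fin d × Fin d,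
        (c α.2.1 α.2.2 * (D α.2.1 α.2.2 - e ω α.2.1 α.1 * e ω α.2.2 α.1))
          * (c β.2.1 β.2.2 * (D β.2.1 β.2.2 - e ω β.2.1 β.1 * e ω β.2.2 β.1)))
      = ∑ β : Fin t × Fin d × Fin d, (c α.2.1 α.2.2 * c β.2.1 β.2.2)
          * (if α.1 = β.1 then N d t * (D α.2.1 β.2.1 * D α.2.2 β.2.2
                + D α.2.1 β.2.2 * D α.2.2 β.2.1
                - 2 * (D α.2.1 α.2.2 * (D α.2.1 β.2.1 * D α.2.1 β.2.2))) else 0) := by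
    intro α
    rw [Finset.sum_comm]
    refine Finset.sum_congr rfl fun β _ => ?_
    have : ∀ ω : Om d t,
        (c α.2.1 α.2.2 * (D α.2.1 α.2.2 - e ω α.2.1 α.1 * e ω α.2.2 α.1))
          * (c β.2.1 β.2.2 * (D β.2.1 β.2.2 - e ω β.2.1 β.1 * e ω β.2.2 β.1))
        = (c α.2.1 α.2.2 * c β.2.1 β.2.2)
          * ((D α.2.1 α.2.2 - e ω α.2.1 α.1 * e ω α.2.2 α.1)
            * (D β.2.1 β.2.2 - e ω β.2.1 β.1 * e ω β.2.2 β.1)) := by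
      intro ω; ring
    simp only [this]
    rw [← Finset.mul_sum, sum_term]
  simp only [hswap]
  -- unpack the product sums
  rw [Fintype.sum_prod_type]
  simp only [Fintype.sum_prod_type]
  -- collapse the m-sum
  have hcol : ∀ (l : Fin t) (p q : Fin d),
      (∑ m : Fin t, ∑ u : Fin d, ∑ v : Fin d, (c p q * c u v)
        * (if l = m then N d t * (D p u * D q v + D p v * D q u
            - 2 * (D p q * (D p u * D p v))) else 0))
      = N d t * (c p q * c p q + c p q * c q p - 2 * (D p q * (c p q * c p p))) := by
    intro l p q
    rw [← inner_collapse c p q]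
    have hinner : ∀ m : Fin t,
        (∑ u : Fin d, ∑ v : Fin d, (c p q * c u v)
          * (if l = m then N d t * (D p u * D q v + D p v * D q u
              - 2 * (D p q * (D p u * D p v))) else 0))
        = if l = m then (∑ u : Fin d, ∑ v : Fin d, (c p q * c u v)
            * (N d t * (D p u * D q v + D p v * D q u
              - 2 * (D p q * (D p u * D p v))))) else 0 := by
      intro m
      by_cases h : l = m
      · simp only [if_pos h]
      · simp only [if_neg h, mul_zero, Finset.sum_const_zero]
    simp only [hinner]
    rw [Finset.sum_ite_eq]
    simp
  simp only [hcol]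
  rw [Finset.sum_const, Finset.card_univ, Fintype.card_fin, nsmul_eq_mul]
  simp only [← Finset.mul_sum]
  ring

lemma signMatrix_apply (ω : Om d t) (p : Fin d) (l : Fin t) :
    signMatrix d t ω p l = e ω p l / Real.sqrt t := rfl

lemma entry_eq {n k : ℕ} (ht : 1 ≤ t) (S : Matrix (Fin n) (Fin d) ℝ)
    (T : Matrix (Fin d) (Fin k) ℝ) (ω : Om d t) (i : Fin n) (j : Fin k) :
    (S * T - S * signMatrix d t ω * (signMatrix d t ω)ᵀ * T) i j
      = (1 / t) * ∑ l : Fin t, ∑ p : Fin d, ∑ q : Fin d,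
          (S i p * T q j) * (D p q - e ω p l * e ω q l) := by
  have htpos : (0:ℝ) < t := by exact_mod_cast Nat.lt_of_lt_of_le Nat.zero_lt_one ht
  have hs : Real.sqrt t * Real.sqrt t = t := Real.mul_self_sqrt (le_of_lt htpos)
  have hsne : Real.sqrt t ≠ 0 := by
    intro h0
    rw [h0, mul_zero] at hs
    exact (ne_of_gt htpos) hs.symm
  -- RHS split
  have hsplit : ∀ l : Fin t, ∀ p : Fin d, ∀ q : Fin d,
      (S i p * T q j) * (D p q - e ω p l * e ω q l)
        = (S i p * T q j) * D p q - (S i p * T q j) * (e ω p l * e ω q l) := by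
    intro l p q; ring
  have hA : ∑ p : Fin d, ∑ q : Fin d, (S i p * T q j) * D p q
      = ∑ p : Fin d, S i p * T p j := by
    refine Finset.sum_congr rfl fun p _ => ?_
    exact collapse1 (fun q => S i p * T q j) p
  simp only [hsplit, Finset.sum_sub_distrib, hA, Finset.sum_const,
    Finset.card_univ, Fintype.card_fin, nsmul_eq_mul]
  -- Now handle the matrix side
  simp only [Matrix.sub_apply, Matrix.mul_apply, Matrix.transpose_apply,
    signMatrix_apply]
  have hB : ∀ q : Fin d,
      (∑ l : Fin t, (∑ p : Fin d, S i p * (e ω p l / Real.sqrt t))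
          * (e ω q l / Real.sqrt t)) * T q j
        = (1 / t) * ∑ l : Fin t, ∑ p : Fin d,
            (S i p * T q j) * (e ω p l * e ω q l) := by
    intro q
    rw [Finset.sum_mul, Finset.mul_sum]
    refine Finset.sum_congr rfl fun l _ => ?_
    rw [Finset.sum_mul, Finset.sum_mul, Finset.mul_sum]
    refine Finset.sum_congr rfl fun p _ => ?_
    field_simp
    rw [Real.sq_sqrt htpos.le]
    ring
  simp only [hB]
  rw [← Finset.mul_sum]
  have hcomm : ∑ q : Fin d, ∑ l : Fin t, ∑ p : Fin d,
      (S i p * T q j) * (e ω p l * e ω q l)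
      = ∑ l : Fin t, ∑ p : Fin d, ∑ q : Fin d,
        (S i p * T q j) * (e ω p l * e ω q l) := by
    rw [Finset.sum_comm]
    exact Finset.sum_congr rfl fun l _ => Finset.sum_comm
  rw [hcomm]
  field_simp
  try rw [hA]
  try ring

lemma sum_sum_scale {n k : ℕ} (C : ℝ) (X : Fin n → ℝ) (Y : Fin k → ℝ) :
    ∑ i : Fin n, ∑ j : Fin k, C * X i * Y j = C * (∑ i, X i) * (∑ j, Y j) := by
  rw [mul_assoc, Finset.sum_mul_sum, Finset.mul_sum]
  exact Finset.sum_congr rfl fun i _ => by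
    rw [Finset.mul_sum]
    exact Finset.sum_congr rfl fun j _ => by ring

/-- Main expectation bound (unnormalized). -/
lemma main_real {n k : ℕ} (ht : 1 ≤ t) (S : Matrix (Fin n) (Fin d) ℝ)
    (T : Matrix (Fin d) (Fin k) ℝ) :
    ∑ ω : Om d t, (∑ i : Fin n, ∑ j : Fin k,
        ((S * T - S * signMatrix d t ω * (signMatrix d t ω)ᵀ * T) i j) ^ 2)
      ≤ N d t * (2 * (∑ i : Fin n, ∑ p : Fin d, (S i p) ^ 2)
          * (∑ p : Fin d, ∑ j : Fin k, (T p j) ^ 2) / t) := by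
  have htpos : (0:ℝ) < t := by exact_mod_cast Nat.lt_of_lt_of_le Nat.zero_lt_one ht
  have hNpos : (0:ℝ) ≤ N d t := by unfold N; positivity
  rw [Finset.sum_comm]
  have hij : ∀ i : Fin n,
      (∑ ω : Om d t, ∑ j : Fin k,
        ((S * T - S * signMatrix d t ω * (signMatrix d t ω)ᵀ * T) i j) ^ 2)
      = ∑ j : Fin k, ∑ ω : Om d t,
        ((S * T - S * signMatrix d t ω * (signMatrix d t ω)ᵀ * T) i j) ^ 2 := by
    intro i; exact Finset.sum_comm
  simp only [hij]
  -- per (i,j) bound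
  have hperij : ∀ (i : Fin n) (j : Fin k),
      (∑ ω : Om d t,
        ((S * T - S * signMatrix d t ω * (signMatrix d t ω)ᵀ * T) i j) ^ 2)
      ≤ N d t * (2 * (∑ p : Fin d, (S i p) ^ 2) * (∑ q : Fin d, (T q j) ^ 2) / t) := by
    intro i j
    have h1 : ∀ ω : Om d t,
        ((S * T - S * signMatrix d t ω * (signMatrix d t ω)ᵀ * T) i j) ^ 2
        = (1 / (t:ℝ)) ^ 2 * (∑ l : Fin t, ∑ p : Fin d, ∑ q : Fin d,
            (S i p * T q j) * (D p q - e ω p l * e ω q l)) ^ 2 := by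
      intro ω
      rw [entry_eq ht S T ω i j, mul_pow]
    simp only [h1]
    rw [← Finset.mul_sum, sum_sq (fun p q => S i p * T q j)]
    have hCS : (∑ p : Fin d, ∑ q : Fin d,
          ((S i p * T q j) * (S i p * T q j) + (S i p * T q j) * (S i q * T p j)
            - 2 * (D p q * ((S i p * T q j) * (S i p * T p j)))))
        ≤ 2 * (∑ p : Fin d, (S i p) ^ 2) * (∑ q : Fin d, (T q j) ^ 2) := by
      have e1 : ∑ p : Fin d, ∑ q : Fin d, (S i p * T q j) * (S i p * T q j)
          = (∑ p : Fin d, (S i p) ^ 2) * (∑ q : Fin d, (T q j) ^ 2) := by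
        rw [Finset.sum_mul_sum]
        exact Finset.sum_congr rfl fun p _ => Finset.sum_congr rfl fun q _ => by ring
      have e2 : ∑ p : Fin d, ∑ q : Fin d, (S i p * T q j) * (S i q * T p j)
          = (∑ p : Fin d, S i p * T p j) ^ 2 := by
        rw [pow_two, Finset.sum_mul_sum]
        exact Finset.sum_congr rfl fun p _ => Finset.sum_congr rfl fun q _ => by ring
      have e3 : (∑ p : Fin d, S i p * T p j) ^ 2
          ≤ (∑ p : Fin d, (S i p) ^ 2) * (∑ q : Fin d, (T q j) ^ 2) :=
        Finset.sum_mul_sq_le_sq_mul_sq _ _ _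
      have e4 : (0:ℝ) ≤ ∑ p : Fin d, ∑ q : Fin d,
          D p q * ((S i p * T q j) * (S i p * T p j)) := by
        refine Finset.sum_nonneg fun p _ => Finset.sum_nonneg fun q _ => ?_
        unfold D
        by_cases h : p = q
        · subst h; simp; nlinarith [sq_nonneg (S i p * T p j)]
        · simp [h]
      simp only [Finset.sum_sub_distrib, Finset.sum_add_distrib, ← Finset.mul_sum]
      rw [e1, e2]
      nlinarith [e3, e4]
    calc (1 / (t:ℝ)) ^ 2 * (N d t * t * (∑ p : Fin d, ∑ q : Fin d,
            ((S i p * T q j) * (S i p * T q j) + (S i p * T q j) * (S i q * T p j)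
              - 2 * (D p q * ((S i p * T q j) * (S i p * T p j))))))
        ≤ (1 / (t:ℝ)) ^ 2 * (N d t * t * (2 * (∑ p : Fin d, (S i p) ^ 2)
            * (∑ q : Fin d, (T q j) ^ 2))) := by
          apply mul_le_mul_of_nonneg_left _ (by positivity)
          apply mul_le_mul_of_nonneg_left hCS (mul_nonneg hNpos htpos.le)
      _ = N d t * (2 * (∑ p : Fin d, (S i p) ^ 2) * (∑ q : Fin d, (T q j) ^ 2) / t) := by
          field_simp
  -- sum the per-(i,j) bounds
  calc (∑ i : Fin n, ∑ j : Fin k, ∑ ω : Om d t,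
        ((S * T - S * signMatrix d t ω * (signMatrix d t ω)ᵀ * T) i j) ^ 2)
      ≤ ∑ i : Fin n, ∑ j : Fin k,
          N d t * (2 * (∑ p : Fin d, (S i p) ^ 2) * (∑ q : Fin d, (T q j) ^ 2) / t) := by
        refine Finset.sum_le_sum fun i _ => Finset.sum_le_sum fun j _ => hperij i j
    _ = N d t * (2 * (∑ i : Fin n, ∑ p : Fin d, (S i p) ^ 2)
          * (∑ p : Fin d, ∑ j : Fin k, (T p j) ^ 2) / t) := by
        have hstep : ∑ i : Fin n, ∑ j : Fin k,
            N d t * (2 * (∑ p : Fin d, (S i p) ^ 2) * (∑ q : Fin d, (T q j) ^ 2) / t)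
            = ∑ i : Fin n, ∑ j : Fin k, (N d t * 2 / t) * (∑ p : Fin d, (S i p) ^ 2)
                * (∑ q : Fin d, (T q j) ^ 2) := by
          refine Finset.sum_congr rfl fun i _ => Finset.sum_congr rfl fun j _ => by ring
        rw [hstep, sum_sum_scale (N d t * 2 / t) (fun i => ∑ p : Fin d, (S i p) ^ 2)
          (fun j => ∑ q : Fin d, (T q j) ^ 2),
          show (∑ p : Fin d, ∑ j : Fin k, (T p j) ^ 2)
            = ∑ j : Fin k, ∑ q : Fin d, (T q j) ^ 2 from Finset.sum_comm]
        ring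

end St11

/-- Markov-type tail bound for approximate matrix multiplication. -/
theorem statement11 (d t n k : ℕ) (ht : 1 ≤ t)
    (S : Matrix (Fin n) (Fin d) ℝ) (T : Matrix (Fin d) (Fin k) ℝ) (a : ℝ) (ha : 0 < a) :
    signMeasure d t
        {ω | a ≤ frobNorm (S * T - S * signMatrix d t ω * (signMatrix d t ω)ᵀ * T)}
      ≤ ENNReal.ofReal (2 * frobNorm S ^ 2 * frobNorm T ^ 2 / ((t : ℝ) * a ^ 2)) := by
  classical
  set Omega := (Fin d → Fin t → Bool)
  set F : Omega → ℝ := fun ω =>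
    frobNorm (S * T - S * signMatrix d t ω * (signMatrix d t ω)ᵀ * T) ^ 2 with hFdef
  have htpos : (0:ℝ) < t := by exact_mod_cast Nat.lt_of_lt_of_le Nat.zero_lt_one ht
  have hF_nonneg : ∀ ω, 0 ≤ F ω := fun ω => sq_nonneg _
  have hfrob : ∀ ω : Omega, F ω = ∑ i : Fin n, ∑ j : Fin k,
      ((S * T - S * signMatrix d t ω * (signMatrix d t ω)ᵀ * T) i j) ^ 2 := by
    intro ω
    simp only [hFdef, frobNorm]
    exact Real.sq_sqrt (Finset.sum_nonneg fun i _ =>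
      Finset.sum_nonneg fun j _ => sq_nonneg _)
  have hfS : frobNorm S ^ 2 = ∑ i : Fin n, ∑ p : Fin d, (S i p) ^ 2 := by
    simp only [frobNorm]
    exact Real.sq_sqrt (Finset.sum_nonneg fun i _ =>
      Finset.sum_nonneg fun j _ => sq_nonneg _)
  have hfT : frobNorm T ^ 2 = ∑ p : Fin d, ∑ j : Fin k, (T p j) ^ 2 := by
    simp only [frobNorm]
    exact Real.sq_sqrt (Finset.sum_nonneg fun i _ =>
      Finset.sum_nonneg fun j _ => sq_nonneg _)
  set C : ℝ := 2 * frobNorm S ^ 2 * frobNorm T ^ 2 / t with hCdef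
  have hC_nonneg : 0 ≤ C := by
    rw [hCdef]
    have h1 : (0:ℝ) ≤ frobNorm S ^ 2 := sq_nonneg _
    have h2 : (0:ℝ) ≤ frobNorm T ^ 2 := sq_nonneg _
    positivity
  have hmain : ∑ ω : Omega, F ω ≤ (Fintype.card Omega : ℝ) * C := by
    have := St11.main_real (d := d) (t := t) ht S T
    simp only [hfrob]
    calc ∑ ω : Omega, ∑ i : Fin n, ∑ j : Fin k,
          ((S * T - S * signMatrix d t ω * (signMatrix d t ω)ᵀ * T) i j) ^ 2
        ≤ St11.N d t * (2 * (∑ i : Fin n, ∑ p : Fin d, (S i p) ^ 2)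
            * (∑ p : Fin d, ∑ j : Fin k, (T p j) ^ 2) / t) := this
      _ = (Fintype.card Omega : ℝ) * C := by
          rw [hCdef, hfS, hfT]; rfl
  -- measure-theoretic part
  have hcard_pos : 0 < Fintype.card Omega := Fintype.card_pos
  have hcard_ne : (Fintype.card Omega : ENNReal) ≠ 0 :=
    Nat.cast_ne_zero.mpr hcard_pos.ne'
  have hcard_ne' : (Fintype.card Omega : ENNReal) ≠ ⊤ := ENNReal.natCast_ne_top _
  have hμsingle : ∀ ω : Omega, signMeasure d t {ω}
      = (Fintype.card Omega : ENNReal)⁻¹ := by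
    intro ω
    rw [signMeasure, PMF.toMeasure_apply_singleton _ _ (measurableSet_singleton ω),
      PMF.uniformOfFintype_apply]
  have hmeas : AEMeasurable (fun ω : Omega => ENNReal.ofReal (F ω)) (signMeasure d t) :=
    (measurable_of_countable _).aemeasurable
  have key := MeasureTheory.mul_meas_ge_le_lintegral₀ (μ := signMeasure d t)
    hmeas (ENNReal.ofReal (a ^ 2))
  have hset : {ω : Omega | a ≤ frobNorm
        (S * T - S * signMatrix d t ω * (signMatrix d t ω)ᵀ * T)}
      = {ω : Omega | ENNReal.ofReal (a ^ 2) ≤ ENNReal.ofReal (F ω)} := by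
    ext ω
    simp only [Set.mem_setOf_eq]
    have hfrob_nonneg : 0 ≤ frobNorm
        (S * T - S * signMatrix d t ω * (signMatrix d t ω)ᵀ * T) :=
      Real.sqrt_nonneg _
    constructor
    · intro h
      exact ENNReal.ofReal_le_ofReal (by
        simp only [hFdef]
        exact pow_le_pow_left₀ ha.le h 2)
    · intro h
      have h2 : a ^ 2 ≤ F ω := by
        have := (ENNReal.ofReal_le_ofReal_iff (hF_nonneg ω)).mp h
        exact this
      simp only [hFdef] at h2
      exact le_of_pow_le_pow_left₀ (by norm_num) hfrob_nonneg h2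
  have hlint : ∫⁻ ω : Omega, ENNReal.ofReal (F ω) ∂(signMeasure d t)
      ≤ ENNReal.ofReal C := by
    rw [MeasureTheory.lintegral_fintype]
    simp only [hμsingle]
    rw [← Finset.sum_mul]
    have hsum : ∑ ω : Omega, ENNReal.ofReal (F ω)
        = ENNReal.ofReal (∑ ω : Omega, F ω) := by
      rw [ENNReal.ofReal_sum_of_nonneg fun ω _ => hF_nonneg ω]
    rw [hsum]
    calc ENNReal.ofReal (∑ ω : Omega, F ω) * (Fintype.card Omega : ENNReal)⁻¹
        ≤ ENNReal.ofReal ((Fintype.card Omega : ℝ) * C)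
            * (Fintype.card Omega : ENNReal)⁻¹ := by
          exact mul_le_mul_left (ENNReal.ofReal_le_ofReal hmain) _
      _ = ENNReal.ofReal C := by
          rw [ENNReal.ofReal_mul (Nat.cast_nonneg _), ENNReal.ofReal_natCast,
            mul_comm (Fintype.card Omega : ENNReal) (ENNReal.ofReal C), mul_assoc,
            ENNReal.mul_inv_cancel hcard_ne hcard_ne', mul_one]
  have ha2 : (0:ℝ) < a ^ 2 := by positivity
  have hfinal : ENNReal.ofReal (a ^ 2) * signMeasure d t
      {ω : Omega | a ≤ frobNorm
        (S * T - S * signMatrix d t ω * (signMatrix d t ω)ᵀ * T)}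
      ≤ ENNReal.ofReal C := by
    rw [hset]
    exact le_trans key hlint
  have hdiv : signMeasure d t
      {ω : Omega | a ≤ frobNorm
        (S * T - S * signMatrix d t ω * (signMatrix d t ω)ᵀ * T)}
      ≤ ENNReal.ofReal C / ENNReal.ofReal (a ^ 2) := by
    rw [ENNReal.le_div_iff_mul_le (Or.inl (by simp [ENNReal.ofReal_eq_zero, not_le, ha2, ha.ne']))
      (Or.inl ENNReal.ofReal_ne_top)]
    rw [mul_comm]
    exact hfinal
  have hCeq : ENNReal.ofReal C / ENNReal.ofReal (a ^ 2)
      = ENNReal.ofReal (2 * frobNorm S ^ 2 * frobNorm T ^ 2 / ((t : ℝ) * a ^ 2)) := by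
    rw [← ENNReal.ofReal_div_of_pos ha2, hCdef, div_div]
  exact hCeq ▸ hdiv
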